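/- For each $\mathbf{n} \in \mathbf{D}$, the function $f(\mathbf{n}) = \sum_{k=0}^{\infty} \sum_{\sigma \in \{0,1\}^k} \frac{1}{(k+1)2^{k/2}} \cdot \frac{1}{\lambda(A(\sigma,\mathbf{n}(k)))} \cdot e(\sigma,\mathbf{n}(k)) \cdot \chi_{A(\sigma,\mathbf{n}(k))}$ with values in $\ell_2$ is Pettis integrable, and for every $\tau \in \{0,1\}^i$ we have $\|\int_{I_\tau} f(\mathbf{n})_{|\tau}\| = 2^{-i/2} \sqrt{\sum_{k=i}^{\infty} \frac{1}{(k+1)^2}}$. -/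

import Mathlib

open MeasureTheory
open scoped Classical

noncomputable section

/-- The Hilbert space `ℓ₂` of square-summable real sequences. -/
abbrev H2 : Type := lp (fun _ : ℕ => ℝ) 2

/-- The index set `B = {(σ,i) : σ ∈ {0,1}^{<∞}, 0 ≤ i ≤ |σ|}`. -/
def Bidx : Type := Σ σ : List Bool, Fin (σ.length + 1)

/-- Left endpoint of the dyadic interval `I_σ`. -/
noncomputable def dyadicLeft (σ : List Bool) : ℝ :=
  ∑ i ∈ Finset.range σ.length, if σ.getD i false then (2:ℝ)⁻¹ ^ (i+1) else 0

/-- The dyadic interval `I_σ ⊆ [0,1]` of length `2^{-|σ|}`: `I_∅ = [0,1]`,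
`I_{σ0}` is the left half and `I_{σ1}` the right half of `I_σ`. -/
noncomputable def dyadicInterval (σ : List Bool) : Set ℝ :=
  Set.Icc (dyadicLeft σ) (dyadicLeft σ + (2:ℝ)⁻¹ ^ σ.length)

/-- `f` is Pettis integrable with respect to `μ`: every continuous functional composed with
`f` is integrable, and over each measurable set there is a vector representing the integrals. -/
def PettisIntegrable {X : Type} [NormedAddCommGroup X] [NormedSpace ℝ X]
    (f : ℝ → X) (μ : MeasureTheory.Measure ℝ) : Prop :=
  (∀ φ : X →L[ℝ] ℝ, MeasureTheory.Integrable (fun t => φ (f t)) μ) ∧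
  ∀ E : Set ℝ, MeasurableSet E → ∃ v : X, ∀ φ : X →L[ℝ] ℝ, φ v = ∫ t in E, φ (f t) ∂μ

/-- `v` is the Pettis integral of `f` over the set `E` (w.r.t. `μ`). -/
def IsPettisIntegralOn {X : Type} [NormedAddCommGroup X] [NormedSpace ℝ X]
    (f : ℝ → X) (μ : MeasureTheory.Measure ℝ) (E : Set ℝ) (v : X) : Prop :=
  ∀ φ : X →L[ℝ] ℝ, φ v = ∫ t in E, φ (f t) ∂μ

/-- The basic function `f = ∑_{(σ,i) ∈ B} c(σ,i) (1/λ(A(σ,i))) e(σ,i) χ_{A(σ,i)}`. -/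
noncomputable def basicFun {X : Type} [NormedAddCommGroup X] [NormedSpace ℝ X]
    (c : Bidx → ℝ) (A : Bidx → Set ℝ) (e : Bidx → X) : ℝ → X :=
  fun t => ∑' p : Bidx,
    Set.indicator (A p) (fun _ => ((MeasureTheory.volume (A p)).toReal)⁻¹ • (c p • e p)) t

/-- The restriction `f_{|τ}`: the subseries of the basic function over indices `(σ,i)`
with `σ` an extension of `τ`. -/
noncomputable def basicFunRes {X : Type} [NormedAddCommGroup X] [NormedSpace ℝ X]
    (τ : List Bool) (c : Bidx → ℝ) (A : Bidx → Set ℝ) (e : Bidx → X) : ℝ → X :=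
  basicFun (fun p => if τ <+: p.1 then c p else 0) A e

/-- Coefficients of the special basic function `f(𝐧)`: the coefficient of `(σ, i)` is
`1/((k+1)2^{k/2})` when `|σ| = k` and `i = 𝐧(k)`, and `0` otherwise. -/
noncomputable def specialCoef (n : ℕ → ℕ) : Bidx → ℝ := fun p =>
  if (p.2 : ℕ) = n p.1.length then
    (((p.1.length : ℝ) + 1) * (2:ℝ) ^ ((p.1.length : ℝ) / 2))⁻¹
  else 0


instance : Countable Bidx := inferInstanceAs (Countable (Σ σ : List Bool, Fin (σ.length + 1)))

open scoped ENNReal NNReal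

-- === helper lemmas, section 1 ===

lemma tsum_ind_of_mem {ι : Type*} {M : Type*} [AddCommMonoid M] [TopologicalSpace M]
    [T2Space M] {A : ι → Set ℝ} (hdisj : ∀ p q : ι, p ≠ q → Disjoint (A p) (A q))
    (h : ι → M) {t : ℝ} {q : ι} (ht : t ∈ A q) :
    ∑' p, (A p).indicator (fun _ => h p) t = h q := by
  rw [tsum_eq_single q (fun p hpq => Set.indicator_of_notMem
      (fun hm => Set.disjoint_left.mp (hdisj p q hpq) hm ht) _)]
  exact Set.indicator_of_mem ht _

lemma tsum_ind_of_not_mem {ι : Type*} {M : Type*} [AddCommMonoid M] [TopologicalSpace M]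
    [T2Space M] {A : ι → Set ℝ} (h : ι → M) {t : ℝ} (ht : ∀ p, t ∉ A p) :
    ∑' p, (A p).indicator (fun _ => h p) t = 0 := by
  have h0 : ∀ p, (A p).indicator (fun _ => h p) t = (0 : M) :=
    fun p => Set.indicator_of_notMem (ht p) _
  rw [tsum_congr h0, tsum_zero]

lemma dyadicLeft_nonneg (σ : List Bool) : 0 ≤ dyadicLeft σ := by
  refine Finset.sum_nonneg fun i _ => ?_
  split <;> positivity

lemma geom_aux (k : ℕ) : ∑ i ∈ Finset.range k, ((2:ℝ)⁻¹)^(i+1) = 1 - (2:ℝ)⁻¹ ^ k := by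
  induction k with
  | zero => simp
  | succ k ih => rw [Finset.sum_range_succ, ih]; ring

lemma dyadicLeft_le (σ : List Bool) : dyadicLeft σ ≤ 1 - (2:ℝ)⁻¹ ^ σ.length := by
  rw [← geom_aux]
  refine Finset.sum_le_sum fun i _ => ?_
  split
  · exact le_rfl
  · positivity

lemma dyadic_subset_Icc (σ : List Bool) : dyadicInterval σ ⊆ Set.Icc (0:ℝ) 1 := by
  refine Set.Icc_subset_Icc (dyadicLeft_nonneg σ) ?_
  have := dyadicLeft_le σ
  linarith

lemma dyadicLeft_concat (σ : List Bool) (b : Bool) :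
    dyadicLeft (σ ++ [b]) = dyadicLeft σ + (if b then (2:ℝ)⁻¹ ^ (σ.length+1) else 0) := by
  unfold dyadicLeft
  rw [List.length_append, List.length_singleton, Finset.sum_range_succ]
  congr 1
  · refine Finset.sum_congr rfl fun i hi => ?_
    rw [List.getD_append _ _ _ _ (Finset.mem_range.mp hi)]
  · have hb : (σ ++ [b]).getD σ.length false = b := by
      rw [List.getD_append_right _ _ _ _ le_rfl, Nat.sub_self]
      rfl
    rw [hb]

lemma dyadicInterval_concat_subset (σ : List Bool) (b : Bool) :
    dyadicInterval (σ ++ [b]) ⊆ dyadicInterval σ := by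
  unfold dyadicInterval
  rw [dyadicLeft_concat, List.length_append, List.length_singleton]
  have h2 : (0:ℝ) < (2:ℝ)⁻¹ ^ σ.length := by positivity
  have h3 : (2:ℝ)⁻¹ ^ (σ.length + 1) = (2:ℝ)⁻¹ ^ σ.length * 2⁻¹ := pow_succ _ _
  cases b with
  | false =>
      rw [if_neg (by simp), add_zero]
      exact Set.Icc_subset_Icc le_rfl (by rw [h3]; nlinarith)
  | true =>
      rw [if_pos rfl]
      exact Set.Icc_subset_Icc (by nlinarith) (by rw [h3]; nlinarith)

lemma dyadicInterval_prefix_subset {τ σ : List Bool} (h : τ <+: σ) :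
    dyadicInterval σ ⊆ dyadicInterval τ := by
  obtain ⟨ρ, rfl⟩ := h
  induction ρ using List.reverseRecOn with
  | nil => simp
  | append_singleton ρ b ih =>
      rw [← List.append_assoc]
      exact (dyadicInterval_concat_subset (τ ++ ρ) b).trans ih

lemma orth_summable {ι : Type*} {e : ι → H2} (he : Orthonormal ℝ e) {a : ι → ℝ}
    (ha : Summable fun p => a p ^ 2) : Summable fun p => a p • e p := by
  have h := (he.orthogonalFamily.summable_iff_norm_sq_summable a).2
    (by simpa [Real.norm_eq_abs, sq_abs] using ha)
  simpa [LinearIsometry.toSpanSingleton_apply] using h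

lemma orth_norm_tsum_sq {ι : Type*} {e : ι → H2} (he : Orthonormal ℝ e) {a : ι → ℝ}
    (ha : Summable fun p => a p ^ 2) :
    ‖∑' p, a p • e p‖ ^ 2 = ∑' p, a p ^ 2 := by
  have hsum : HasSum (fun p => a p • e p) (∑' p, a p • e p) := (orth_summable he ha).hasSum
  have h1 : Filter.Tendsto (fun s : Finset ι => ‖∑ p ∈ s, a p • e p‖ ^ 2) Filter.atTop
      (nhds (‖∑' p, a p • e p‖ ^ 2)) :=
    ((continuous_norm.pow 2).tendsto _).comp hsum
  have h2 : ∀ s : Finset ι, ‖∑ p ∈ s, a p • e p‖ ^ 2 = ∑ p ∈ s, a p ^ 2 := by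
    intro s
    have := he.orthogonalFamily.norm_sum a s
    simpa [LinearIsometry.toSpanSingleton_apply, Real.norm_eq_abs, sq_abs] using this
  have h3 : HasSum (fun p => a p ^ 2) (‖∑' p, a p • e p‖ ^ 2) := by
    refine Filter.Tendsto.congr (fun s => h2 s) h1
  exact h3.tsum_eq.symm

lemma pettis_unique {v w : H2} (h : ∀ φ : H2 →L[ℝ] ℝ, φ v = φ w) : v = w := by
  have h1 := h (InnerProductSpace.toDual ℝ H2 (v - w))
  simp only [InnerProductSpace.toDual_apply_apply] at h1
  have h2 : (inner ℝ (v - w) (v - w) : ℝ) = 0 := by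
    rw [inner_sub_right, h1, sub_self]
  exact sub_eq_zero.mp (inner_self_eq_zero.mp h2)

lemma summable_inv_sq_shift (i : ℕ) :
    Summable (fun m : ℕ => (((i:ℝ) + m + 1)⁻¹) ^ 2) := by
  have h0 : Summable (fun m : ℕ => 1 / ((m:ℝ) + 1) ^ 2) := by
    have h := (_root_.summable_nat_add_iff 1).2
      (Real.summable_one_div_nat_pow.2 one_lt_two)
    refine h.congr fun m => ?_
    push_cast
    ring
  refine Summable.of_nonneg_of_le (fun m => by positivity) (fun m => ?_) h0
  rw [one_div, inv_pow]
  refine inv_anti₀ (by positivity) ?_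
  nlinarith [Nat.cast_nonneg (α := ℝ) i, Nat.cast_nonneg (α := ℝ) m]

lemma list_length_tsum (H : ℕ → ℝ) (h0 : ∀ k, 0 ≤ H k)
    (hs : Summable fun k : ℕ => (2:ℝ) ^ k * H k) :
    Summable (fun ρ : List Bool => H ρ.length) ∧
      ∑' ρ : List Bool, H ρ.length = ∑' k : ℕ, (2:ℝ) ^ k * H k := by
  have hcard : ∀ k : ℕ, ∑' _g : Fin k → Bool, H k = (2:ℝ) ^ k * H k := by
    intro k
    rw [tsum_fintype]
    simp [Finset.sum_const, Finset.card_univ, mul_comm]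
  set E := List.equivSigmaTuple (α := Bool)
  have heq : ∀ x : Σ k, Fin k → Bool, H (E.symm x).length = H x.1 := by
    rintro ⟨k, g⟩
    simp [E, List.equivSigmaTuple]
  have hsig : Summable (fun x : Σ k, Fin k → Bool => H x.1) := by
    rw [summable_sigma_of_nonneg (fun x => h0 _)]
    constructor
    · intro k; exact Summable.of_finite
    · refine (hs.congr fun k => ?_)
      rw [hcard k]
  have hsum : Summable (fun ρ : List Bool => H ρ.length) := by
    rw [← E.symm.summable_iff]
    exact hsig.congr fun x => (heq x).symm
  refine ⟨hsum, ?_⟩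
  calc ∑' ρ : List Bool, H ρ.length = ∑' x : Σ k, Fin k → Bool, H (E.symm x).length :=
        (E.symm.tsum_eq _).symm
    _ = ∑' x : Σ k, Fin k → Bool, H x.1 := tsum_congr heq
    _ = ∑' k : ℕ, ∑' g : Fin k → Bool, H k := hsig.tsum_sigma
    _ = ∑' k : ℕ, (2:ℝ) ^ k * H k := tsum_congr hcard

lemma sc_sq (k : ℕ) :
    ((((k:ℝ)) + 1) * (2:ℝ) ^ ((k:ℝ) / 2))⁻¹ ^ 2 = (((k:ℝ) + 1) ^ 2 * (2:ℝ) ^ k)⁻¹ := by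
  have h1 : ((2:ℝ) ^ ((k:ℝ) / 2)) ^ (2:ℕ) = (2:ℝ) ^ (k:ℕ) := by
    have h0 : (k:ℝ) / 2 * ((2:ℕ):ℝ) = ((k:ℕ):ℝ) := by push_cast; ring
    rw [← Real.rpow_natCast ((2:ℝ) ^ ((k:ℝ) / 2)) 2,
      ← Real.rpow_mul (by norm_num : (0:ℝ) ≤ 2), h0, Real.rpow_natCast]
  rw [inv_pow, mul_pow, h1]

lemma bidx_tsum (n : ℕ → ℕ) (hn : ∀ i, n i ≤ i) (τ : List Bool) (g : ℕ → ℝ)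
    (h0 : ∀ k, 0 ≤ g k)
    (hs : Summable fun m : ℕ => (2:ℝ) ^ m * g (τ.length + m)) :
    Summable (fun p : Bidx =>
        if τ <+: p.1 ∧ (p.2 : ℕ) = n p.1.length then g p.1.length else 0) ∧
      ∑' p : Bidx, (if τ <+: p.1 ∧ (p.2 : ℕ) = n p.1.length then g p.1.length else 0)
        = ∑' m : ℕ, (2:ℝ) ^ m * g (τ.length + m) := by
  set F : Bidx → ℝ := fun p =>
    if τ <+: p.1 ∧ (p.2 : ℕ) = n p.1.length then g p.1.length else 0 with hF
  set K : List Bool → Bidx :=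
    fun ρ => ⟨τ ++ ρ, ⟨n (τ ++ ρ).length, Nat.lt_succ_of_le (hn _)⟩⟩ with hK
  have hKinj : Function.Injective K := by
    intro ρ ρ' h
    have h1 : τ ++ ρ = τ ++ ρ' := congrArg Sigma.fst h
    exact List.append_cancel_left h1
  have hsupp : Function.support F ⊆ Set.range K := by
    rintro ⟨σ, j⟩ hp
    replace hp : ¬ (if τ <+: σ ∧ (j:ℕ) = n σ.length then g σ.length else 0) = 0 := hp
    simp only [ite_eq_right_iff, not_forall] at hp
    obtain ⟨⟨⟨ρ, hρ⟩, h2⟩, -⟩ := hp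
    refine ⟨ρ, ?_⟩
    subst hρ
    exact congrArg (Sigma.mk (τ ++ ρ)) (Fin.ext h2.symm)
  have hFK : ∀ ρ : List Bool, F (K ρ) = g (τ.length + ρ.length) := by
    intro ρ
    simp only [F, K]
    rw [if_pos ⟨⟨ρ, rfl⟩, trivial⟩, List.length_append]
  obtain ⟨hsum1, htsum1⟩ := list_length_tsum (fun m => g (τ.length + m))
    (fun m => h0 _) hs
  have hsumFK : Summable (F ∘ K) := hsum1.congr fun ρ => (hFK ρ).symm
  have hsumF : Summable F := (hKinj.summable_iff (fun x hx => by
    by_contra h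
    exact hx (hsupp h))).1 hsumFK
  refine ⟨hsumF, ?_⟩
  calc ∑' p : Bidx, F p = ∑' ρ : List Bool, F (K ρ) := (hKinj.tsum_eq hsupp).symm
    _ = ∑' ρ : List Bool, g (τ.length + ρ.length) := tsum_congr hFK
    _ = ∑' m : ℕ, (2:ℝ) ^ m * g (τ.length + m) := htsum1

lemma term_simp (i m : ℕ) :
    (2:ℝ) ^ m * ((((i + m : ℕ):ℝ) + 1) ^ 2 * (2:ℝ) ^ (i + m : ℕ))⁻¹
      = ((2:ℝ) ^ i)⁻¹ * (((i:ℝ) + m + 1)⁻¹) ^ 2 := by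
  push_cast
  rw [pow_add]
  have h1 : ((i:ℝ) + m + 1) ≠ 0 := by positivity
  have h2 : (2:ℝ) ^ i ≠ 0 := by positivity
  have h3 : (2:ℝ) ^ m ≠ 0 := by positivity
  field_simp

lemma comp_basicFun {X : Type} [NormedAddCommGroup X] [NormedSpace ℝ X]
    (A : Bidx → Set ℝ) (hdisj : ∀ p q : Bidx, p ≠ q → Disjoint (A p) (A q))
    (c : Bidx → ℝ) (e : Bidx → X) (φ : X →L[ℝ] ℝ) :
    (fun t => φ (basicFun c A e t)) =
      fun t => ∑' p : Bidx, (A p).indicator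
        (fun _ => ((volume (A p)).toReal)⁻¹ * (c p * φ (e p))) t := by
  funext t
  by_cases h : ∃ q, t ∈ A q
  · obtain ⟨q, hq⟩ := h
    rw [basicFun, tsum_ind_of_mem hdisj _ hq, tsum_ind_of_mem hdisj _ hq]
    simp [smul_smul, mul_assoc]
  · push_neg at h
    rw [basicFun, tsum_ind_of_not_mem _ h, tsum_ind_of_not_mem _ h, map_zero]

lemma lint_ind {A : Bidx → Set ℝ} (hAm : ∀ p, MeasurableSet (A p)) (r : Bidx → ℝ)
    (ν : Measure ℝ) (p : Bidx) :
    ∫⁻ t, ‖(A p).indicator (fun _ => r p) t‖₊ ∂ν = ENNReal.ofReal |r p| * ν (A p) := by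
  have h1 : (fun t => (‖(A p).indicator (fun _ => r p) t‖₊ : ℝ≥0∞)) =
      fun t => (A p).indicator (fun _ => (‖r p‖₊ : ℝ≥0∞)) t := by
    funext t
    by_cases h : t ∈ A p <;> simp [h]
  rw [h1, lintegral_indicator (hAm p) _, setLIntegral_const]
  congr 1
  exact (Real.enorm_eq_ofReal_abs _)

lemma integrable_tsum_indicator {r : Bidx → ℝ} {A : Bidx → Set ℝ}
    (hAm : ∀ p, MeasurableSet (A p))
    (hdisj : ∀ p q : Bidx, p ≠ q → Disjoint (A p) (A q))
    (ν : Measure ℝ)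
    (hb : ∑' p, (ENNReal.ofReal |r p| * ν (A p)) ≠ ⊤) :
    Integrable (fun t => ∑' p, (A p).indicator (fun _ => r p) t) ν := by
  set F := fun t => ∑' p, (A p).indicator (fun _ => r p) t with hFdef
  have hFmeas : Measurable F := by
    have hpos : Measurable fun t =>
        ∑' p, (A p).indicator (fun _ => ENNReal.ofReal (r p)) t :=
      Measurable.ennreal_tsum fun p => measurable_const.indicator (hAm p)
    have hneg : Measurable fun t =>
        ∑' p, (A p).indicator (fun _ => ENNReal.ofReal (-r p)) t :=
      Measurable.ennreal_tsum fun p => measurable_const.indicator (hAm p)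
    have hFeq : F = fun t =>
        (∑' p, (A p).indicator (fun _ => ENNReal.ofReal (r p)) t).toReal -
        (∑' p, (A p).indicator (fun _ => ENNReal.ofReal (-r p)) t).toReal := by
      funext t
      by_cases h : ∃ q, t ∈ A q
      · obtain ⟨q, hq⟩ := h
        rw [hFdef]
        simp only [tsum_ind_of_mem hdisj _ hq]
        rw [ENNReal.toReal_ofReal', ENNReal.toReal_ofReal']
        exact (max_zero_sub_max_neg_zero_eq_self _).symm
      · push_neg at h
        rw [hFdef]
        simp only [tsum_ind_of_not_mem _ h]
        simp
    rw [hFeq]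
    exact (hpos.ennreal_toReal).sub (hneg.ennreal_toReal)
  refine ⟨hFmeas.aestronglyMeasurable, ?_⟩
  have step1 : ∫⁻ t, (‖F t‖₊ : ℝ≥0∞) ∂ν ≤
      ∫⁻ t, ∑' p, (‖(A p).indicator (fun _ => r p) t‖₊ : ℝ≥0∞) ∂ν := by
    refine lintegral_mono fun t => ?_
    by_cases h : ∃ q, t ∈ A q
    · obtain ⟨q, hq⟩ := h
      have hFt : F t = r q := by
        rw [hFdef]
        simpa [Set.indicator_of_mem hq] using tsum_ind_of_mem hdisj (fun p => r p) hq
      have h2 : (‖F t‖₊ : ℝ≥0∞) = ‖(A q).indicator (fun _ => r q) t‖₊ := by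
        rw [hFt, Set.indicator_of_mem hq]
      rw [h2]
      exact ENNReal.le_tsum q
    · push_neg at h
      have hFt : F t = 0 := by rw [hFdef]; exact tsum_ind_of_not_mem _ h
      simp [hFt]
  have step2 : ∫⁻ t, ∑' p, (‖(A p).indicator (fun _ => r p) t‖₊ : ℝ≥0∞) ∂ν
      = ∑' p, ∫⁻ t, (‖(A p).indicator (fun _ => r p) t‖₊ : ℝ≥0∞) ∂ν :=
    lintegral_tsum fun p =>
      (measurable_const.indicator (hAm p)).nnnorm.coe_nnreal_ennreal.aemeasurable
  have step3 : ∑' p, ∫⁻ t, (‖(A p).indicator (fun _ => r p) t‖₊ : ℝ≥0∞) ∂ν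
      ≤ ∑' p, ENNReal.ofReal |r p| * ν (A p) :=
    ENNReal.tsum_le_tsum fun p => le_of_eq (lint_ind hAm r ν p)
  have hle := (step1.trans (le_of_eq step2)).trans step3
  exact lt_of_le_of_lt hle hb.lt_top

lemma main_core (A : Bidx → Set ℝ) (hAm : ∀ p, MeasurableSet (A p))
    (hfin : ∀ p, volume (A p) ≠ ⊤) (hpos : ∀ p, 0 < volume (A p))
    (hdisj : ∀ p q : Bidx, p ≠ q → Disjoint (A p) (A q))
    (e : Bidx → H2) (he : Orthonormal ℝ e)
    (c : Bidx → ℝ) (hc : Summable fun p => c p ^ 2)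
    (ν : Measure ℝ) (hν : ∀ p, ν (A p) ≤ volume (A p)) :
    (∀ φ : H2 →L[ℝ] ℝ, Integrable (fun t => φ (basicFun c A e t)) ν) ∧
    Summable (fun p : Bidx => (c p * ((ν (A p)).toReal * ((volume (A p)).toReal)⁻¹)) • e p) ∧
    ∀ φ : H2 →L[ℝ] ℝ,
      φ (∑' p, (c p * ((ν (A p)).toReal * ((volume (A p)).toReal)⁻¹)) • e p)
        = ∫ t, φ (basicFun c A e t) ∂ν := by
  set a : Bidx → ℝ := fun p => c p * ((ν (A p)).toReal * ((volume (A p)).toReal)⁻¹) with ha_def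
  have htpos : ∀ p, 0 < (volume (A p)).toReal :=
    fun p => ENNReal.toReal_pos (hpos p).ne' (hfin p)
  have hratio0 : ∀ p, 0 ≤ (ν (A p)).toReal * ((volume (A p)).toReal)⁻¹ :=
    fun p => by positivity
  have hratio1 : ∀ p, (ν (A p)).toReal * ((volume (A p)).toReal)⁻¹ ≤ 1 := by
    intro p
    rw [← div_eq_mul_inv, div_le_one (htpos p)]
    exact ENNReal.toReal_mono (hfin p) (hν p)
  have haabs : ∀ p, |a p| ≤ |c p| := by
    intro p
    rw [ha_def, abs_mul]
    have := abs_of_nonneg (hratio0 p)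
    nlinarith [abs_nonneg (c p), hratio1 p, hratio0 p]
  have ha2 : Summable fun p => a p ^ 2 := by
    refine Summable.of_nonneg_of_le (fun p => sq_nonneg _) (fun p => ?_) hc
    have h1 := pow_le_pow_left₀ (abs_nonneg (a p)) (haabs p) 2
    rwa [sq_abs, sq_abs] at h1
  have hsumv : Summable (fun p => a p • e p) := orth_summable he ha2
  -- functional-dependent facts
  have key : ∀ φ : H2 →L[ℝ] ℝ,
      Integrable (fun t => φ (basicFun c A e t)) ν ∧
      φ (∑' p, a p • e p) = ∫ t, φ (basicFun c A e t) ∂ν := by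
    intro φ
    set u : H2 := (InnerProductSpace.toDual ℝ H2).symm φ with hu
    have hφ : ∀ x : H2, φ x = inner ℝ u x := fun x =>
      (InnerProductSpace.toDual_symm_apply).symm
    have hcore : Summable fun p => |c p * φ (e p)| := by
      have hb : Summable fun p => (inner ℝ u (e p) : ℝ) ^ 2 := by
        have h := he.inner_products_summable (x := u)
        refine h.congr fun p => ?_
        rw [real_inner_comm, Real.norm_eq_abs, sq_abs]
      refine Summable.of_nonneg_of_le (fun p => abs_nonneg _) (fun p => ?_)
        ((hc.add hb).div_const 2)
      rw [hφ (e p), abs_mul]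
      nlinarith [sq_nonneg (|c p| - |(inner ℝ u (e p) : ℝ)|), sq_abs (c p),
        sq_abs (inner ℝ u (e p) : ℝ), abs_nonneg (c p), abs_nonneg (inner ℝ u (e p) : ℝ)]
    set r : Bidx → ℝ := fun p => ((volume (A p)).toReal)⁻¹ * (c p * φ (e p)) with hr
    have hbd : ∑' p, (ENNReal.ofReal |r p| * ν (A p)) ≠ ⊤ := by
      have h1 : ∀ p, ENNReal.ofReal |r p| * ν (A p) ≤ ENNReal.ofReal |c p * φ (e p)| := by
        intro p
        calc ENNReal.ofReal |r p| * ν (A p)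
            ≤ ENNReal.ofReal |r p| * volume (A p) := by
              exact mul_le_mul_right (hν p) _
          _ = ENNReal.ofReal |r p| * ENNReal.ofReal ((volume (A p)).toReal) := by
              rw [ENNReal.ofReal_toReal (hfin p)]
          _ = ENNReal.ofReal (|r p| * (volume (A p)).toReal) :=
              (ENNReal.ofReal_mul (abs_nonneg _)).symm
          _ = ENNReal.ofReal |c p * φ (e p)| := by
              congr 1
              rw [hr, abs_mul, abs_of_nonneg (inv_nonneg.mpr (htpos p).le)]
              rw [mul_comm ((volume (A p)).toReal⁻¹) _, mul_assoc,
                inv_mul_cancel₀ (htpos p).ne', mul_one]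
      have h2 : ∑' p, (ENNReal.ofReal |r p| * ν (A p))
          ≤ ∑' p, ENNReal.ofReal |c p * φ (e p)| := ENNReal.tsum_le_tsum h1
      have h3 : ∑' p, ENNReal.ofReal |c p * φ (e p)|
          = ENNReal.ofReal (∑' p, |c p * φ (e p)|) :=
        (ENNReal.ofReal_tsum_of_nonneg (fun p => abs_nonneg _) hcore).symm
      exact ((h2.trans_eq h3).trans_lt ENNReal.ofReal_lt_top).ne
    have hint : Integrable (fun t => φ (basicFun c A e t)) ν := by
      rw [comp_basicFun A hdisj c e φ]
      exact integrable_tsum_indicator hAm hdisj ν hbd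
    refine ⟨hint, ?_⟩
    have hlhs : φ (∑' p, a p • e p) = ∑' p, a p * φ (e p) := by
      rw [ContinuousLinearMap.map_tsum φ hsumv]
      exact tsum_congr fun p => by rw [ContinuousLinearMap.map_smul, smul_eq_mul]
    have hrhs : ∫ t, φ (basicFun c A e t) ∂ν = ∑' p, a p * φ (e p) := by
      rw [comp_basicFun A hdisj c e φ]
      have hbd2 : (∑' p : Bidx, ∫⁻ t, (‖(A p).indicator (fun _ => r p) t‖₊ : ℝ≥0∞) ∂ν) ≠ ⊤ := by
        rw [tsum_congr (fun p => lint_ind hAm r ν p)]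
        exact hbd
      rw [integral_tsum (fun p => (measurable_const.indicator (hAm p)).aestronglyMeasurable) hbd2]
      refine tsum_congr fun p => ?_
      rw [integral_indicator_const _ (hAm p), smul_eq_mul, ha_def, measureReal_def]
      ring
    rw [hlhs, hrhs]
  exact ⟨fun φ => (key φ).1, hsumv, fun φ => (key φ).2⟩

-- new small lemmas
def gfun : ℕ → ℝ := fun k => (((k:ℝ) + 1) ^ 2 * (2:ℝ) ^ k)⁻¹

lemma gfun_nonneg (k : ℕ) : 0 ≤ gfun k := by unfold gfun; positivity

lemma hs_shift (i : ℕ) : Summable (fun m : ℕ => (2:ℝ) ^ m * gfun (i + m)) :=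
  (((summable_inv_sq_shift i).mul_left ((2:ℝ) ^ i)⁻¹)).congr fun m => (term_simp i m).symm

lemma sq_specialCoef (n : ℕ → ℕ) (τ : List Bool) (p : Bidx) :
    (if τ <+: p.1 then specialCoef n p else 0) ^ 2
      = (if τ <+: p.1 ∧ (p.2 : ℕ) = n p.1.length then gfun p.1.length else 0) := by
  by_cases h1 : τ <+: p.1
  · rw [if_pos h1]
    by_cases h2 : (p.2 : ℕ) = n p.1.length
    · rw [if_pos ⟨h1, h2⟩]
      show specialCoef n p ^ 2 = gfun p.1.length
      unfold specialCoef gfun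
      rw [if_pos h2]
      exact sc_sq p.1.length
    · rw [if_neg (fun hc => h2 hc.2)]
      unfold specialCoef
      rw [if_neg h2]
      norm_num
  · rw [if_neg h1, if_neg (fun hc => h1 hc.1)]
    norm_num


/-- Lemma 3.2: for `𝐧 ∈ D`, the special basic function `f(𝐧)` with values in `ℓ₂` is
Pettis integrable and for `τ ∈ {0,1}^i`,
`‖∫_{I_τ} f(𝐧)_{|τ}‖ = 2^{-i/2} √(∑_{k=i}^∞ 1/(k+1)²)`. -/
theorem stmt8 (A : Bidx → Set ℝ) (hAc : ∀ p, IsClosed (A p))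
    (hAs : ∀ p : Bidx, A p ⊆ dyadicInterval p.1)
    (hApos : ∀ p, 0 < volume (A p))
    (hdisj : ∀ p q : Bidx, p ≠ q → Disjoint (A p) (A q))
    (e : Bidx → H2) (he : Orthonormal ℝ e)
    (n : ℕ → ℕ) (hn : ∀ i, n i ≤ i) :
    PettisIntegrable (basicFun (specialCoef n) A e) (volume.restrict (Set.Icc 0 1)) ∧
    ∀ (i : ℕ) (τ : List Bool), τ.length = i → ∀ v : H2,
      IsPettisIntegralOn (basicFunRes τ (specialCoef n) A e)
        (volume.restrict (Set.Icc 0 1)) (dyadicInterval τ) v →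
      ‖v‖ = (2:ℝ) ^ (-(i:ℝ)/2) *
        Real.sqrt (∑' m : ℕ, (((i:ℝ) + (m:ℝ) + 1)⁻¹) ^ 2) := by
  set μ : Measure ℝ := volume.restrict (Set.Icc 0 1) with hμ
  have hAm : ∀ p, MeasurableSet (A p) := fun p => (hAc p).measurableSet
  have hsub01 : ∀ p : Bidx, A p ⊆ Set.Icc 0 1 := fun p => (hAs p).trans (dyadic_subset_Icc _)
  have hfin : ∀ p, volume (A p) ≠ ⊤ := fun p =>
    ((measure_mono (hsub01 p)).trans_lt measure_Icc_lt_top).ne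
  have htpos : ∀ p, 0 < (volume (A p)).toReal :=
    fun p => ENNReal.toReal_pos (hApos p).ne' (hfin p)
  have hc : Summable fun p : Bidx => specialCoef n p ^ 2 := by
    have h1 : ∀ p : Bidx, specialCoef n p ^ 2 =
        (if ([] : List Bool) <+: p.1 ∧ (p.2 : ℕ) = n p.1.length then gfun p.1.length else 0) := by
      intro p
      rw [← sq_specialCoef n [] p, if_pos List.nil_prefix]
    exact ((bidx_tsum n hn [] gfun gfun_nonneg (by simpa using hs_shift 0)).1).congr
      fun p => (h1 p).symm
  refine ⟨⟨?_, ?_⟩, ?_⟩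
  · intro φ
    have hν1 : ∀ p, μ (A p) ≤ volume (A p) := fun p => by
      rw [hμ, Measure.restrict_apply' measurableSet_Icc]
      exact measure_mono Set.inter_subset_left
    exact (main_core A hAm hfin hApos hdisj e he _ hc μ hν1).1 φ
  · intro E hE
    have hν2 : ∀ p, (μ.restrict E) (A p) ≤ volume (A p) := fun p => by
      rw [Measure.restrict_apply' hE, hμ, Measure.restrict_apply' measurableSet_Icc]
      exact measure_mono (Set.inter_subset_left.trans Set.inter_subset_left)
    obtain ⟨-, hsum, hrep⟩ := main_core A hAm hfin hApos hdisj e he _ hc (μ.restrict E) hν2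
    exact ⟨_, hrep⟩
  · intro i τ hτ v hv
    subst hτ
    set c' : Bidx → ℝ := fun p => if τ <+: p.1 then specialCoef n p else 0 with hc'def
    have hc'2 : Summable fun p => c' p ^ 2 := by
      refine Summable.of_nonneg_of_le (fun p => sq_nonneg _) (fun p => ?_) hc
      rw [hc'def]
      dsimp only
      split
      · exact le_rfl
      · simpa using sq_nonneg (specialCoef n p)
    have hE : MeasurableSet (dyadicInterval τ) := measurableSet_Icc
    have hν2 : ∀ p, (μ.restrict (dyadicInterval τ)) (A p) ≤ volume (A p) := fun p => by
      rw [Measure.restrict_apply' hE, hμ, Measure.restrict_apply' measurableSet_Icc]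
      exact measure_mono (Set.inter_subset_left.trans Set.inter_subset_left)
    obtain ⟨-, hsum, hrep⟩ := main_core A hAm hfin hApos hdisj e he c' hc'2
      (μ.restrict (dyadicInterval τ)) hν2
    have haeq : ∀ p : Bidx,
        c' p * (((μ.restrict (dyadicInterval τ)) (A p)).toReal * ((volume (A p)).toReal)⁻¹)
          = c' p := by
      intro p
      by_cases h : τ <+: p.1
      · have hsubτ : A p ⊆ dyadicInterval τ := (hAs p).trans (dyadicInterval_prefix_subset h)
        have h1 : (μ.restrict (dyadicInterval τ)) (A p) = volume (A p) := by
          rw [Measure.restrict_apply' hE, hμ, Measure.restrict_apply' measurableSet_Icc]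
          congr 1
          rw [Set.inter_eq_self_of_subset_left hsubτ,
            Set.inter_eq_self_of_subset_left (hsub01 p)]
        rw [h1, mul_inv_cancel₀ (htpos p).ne', mul_one]
      · have h0 : c' p = 0 := by rw [hc'def]; exact if_neg h
        rw [h0, zero_mul]
    simp only [haeq] at hsum hrep
    have hveq : v = ∑' p, c' p • e p :=
      pettis_unique fun φ => by rw [hv φ]; exact (hrep φ).symm
    rw [hveq]
    have hn2 : ‖∑' p, c' p • e p‖ ^ 2 = ∑' p, c' p ^ 2 := orth_norm_tsum_sq he hc'2
    obtain ⟨-, htsum⟩ := bidx_tsum n hn τ gfun gfun_nonneg (hs_shift τ.length)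
    have hval : ∑' p, c' p ^ 2 = ∑' m : ℕ, (2:ℝ) ^ m * gfun (τ.length + m) := by
      rw [← htsum]
      exact tsum_congr fun p => sq_specialCoef n τ p
    have hval2 : ∑' m : ℕ, (2:ℝ) ^ m * gfun (τ.length + m)
        = ((2:ℝ) ^ τ.length)⁻¹ * ∑' m : ℕ, (((τ.length:ℝ) + m + 1)⁻¹) ^ 2 := by
      rw [← tsum_mul_left]
      exact tsum_congr fun m => term_simp τ.length m
    have hnorm : ‖∑' p, c' p • e p‖
        = Real.sqrt (((2:ℝ) ^ τ.length)⁻¹ * ∑' m : ℕ, (((τ.length:ℝ) + m + 1)⁻¹) ^ 2) := by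
      rw [← hval2, ← hval, ← hn2, Real.sqrt_sq (norm_nonneg _)]
    rw [hnorm, Real.sqrt_mul (by positivity) _]
    congr 1
    have h1 : ((2:ℝ) ^ (τ.length : ℕ))⁻¹ = (2:ℝ) ^ (-(τ.length:ℝ)) := by
      rw [Real.rpow_neg (by norm_num : (0:ℝ) ≤ 2), Real.rpow_natCast]
    rw [h1, Real.sqrt_eq_rpow, ← Real.rpow_mul (by norm_num : (0:ℝ) ≤ 2)]
    congr 1
    ring
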